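/- Let L > 0 and let θ : [0, L] → ℝ be measurable. Then |∫₀ᴸ (1 + e^{iθ(x)})/2 · dx/L| ≤ 1 − (1/π²) ∫₀ᴸ d(θ(x))² dx/L, where d(y) = dist(y, 2πℤ) is the distance from y to the nearest integer multiple of 2π. -/

import Mathlib

open Real MeasureTheory

/-- Jordan-type inequality on `[0, π/4]`. -/
lemma aux_jordan_quarter {x : ℝ} (h0 : 0 ≤ x) (h1 : x ≤ π / 4) :
    2 * Real.sqrt 2 / π * x ≤ Real.sin x := by
  have hπ := Real.pi_pos
  have hconc := strictConcaveOn_sin_Icc.concaveOn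
  set t := 4 * x / π with ht
  have ht0 : 0 ≤ t := by positivity
  have ht1 : t ≤ 1 := by rw [ht, div_le_one hπ]; linarith
  have hmem0 : (0 : ℝ) ∈ Set.Icc 0 π := by constructor <;> linarith
  have hmemb : (π / 4 : ℝ) ∈ Set.Icc 0 π := by constructor <;> linarith
  have hcomb := hconc.2 hmem0 hmemb (by linarith : (0:ℝ) ≤ 1 - t) ht0 (by ring)
  have hx : (1 - t) • (0 : ℝ) + t • (π / 4) = x := by
    rw [smul_zero, zero_add, smul_eq_mul, ht]
    field_simp
  rw [hx] at hcomb
  have hs : Real.sin (π / 4) = Real.sqrt 2 / 2 := Real.sin_pi_div_four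
  rw [Real.sin_zero, hs, smul_eq_mul, smul_eq_mul, mul_zero, zero_add] at hcomb
  calc 2 * Real.sqrt 2 / π * x = t * (Real.sqrt 2 / 2) := by
        rw [ht]; field_simp; ring
    _ ≤ Real.sin x := hcomb

/-- Key scalar inequality: `cos (t/2) ≤ 1 - t²/π²` for `t ∈ [0, π]`. -/
lemma aux_cos_half_le {t : ℝ} (h0 : 0 ≤ t) (h1 : t ≤ π) :
    Real.cos (t / 2) ≤ 1 - t ^ 2 / π ^ 2 := by
  have hπ := Real.pi_pos
  have hs0 : 0 ≤ t / 4 := by linarith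
  have hs1 : t / 4 ≤ π / 4 := by linarith
  have hsin := aux_jordan_quarter hs0 hs1
  have hlb0 : 0 ≤ 2 * Real.sqrt 2 / π * (t / 4) := by positivity
  have hsq : (2 * Real.sqrt 2 / π * (t / 4)) ^ 2 ≤ Real.sin (t / 4) ^ 2 :=
    pow_le_pow_left₀ hlb0 hsin 2
  have h2 : Real.sqrt 2 ^ 2 = 2 := Real.sq_sqrt (by norm_num)
  have hcos : Real.sin (t / 4) ^ 2 = 1 / 2 - Real.cos (t / 2) / 2 := by
    have h := Real.sin_sq_eq_half_sub (t / 4)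
    rw [show 2 * (t / 4) = t / 2 by ring] at h
    exact h
  have hπ2 : (0:ℝ) < π ^ 2 := by positivity
  rw [hcos] at hsq
  have hexp : (2 * Real.sqrt 2 / π * (t / 4)) ^ 2 = Real.sqrt 2 ^ 2 * (t / (2 * π)) ^ 2 := by
    ring
  rw [h2] at hexp
  have hexp2 : (2:ℝ) * (t / (2 * π)) ^ 2 = t ^ 2 / π ^ 2 / 2 := by
    rw [div_pow]
    field_simp
  rw [hexp, hexp2] at hsq
  linarith

/-- The distance to `2πℤ` is at most `|y - 2π·round(y/(2π))| ≤ π`. -/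
lemma aux_infDist_bounds (y : ℝ) :
    ∃ r : ℝ, |r| ≤ π ∧
      Metric.infDist y (Set.range fun n : ℤ => 2 * Real.pi * n) ≤ |r| ∧
      ∃ n : ℤ, y = 2 * π * n + r := by
  have hπ := Real.pi_pos
  have h2π : (0:ℝ) < 2 * π := by linarith
  refine ⟨y - 2 * π * round (y / (2 * π)), ?_, ?_, round (y / (2 * π)), by ring⟩
  · have h := abs_sub_round (y / (2 * π))
    have hval : y - 2 * π * round (y / (2 * π)) =
        2 * π * (y / (2 * π) - round (y / (2 * π))) := by
      field_simp
    rw [hval, abs_mul, abs_of_pos h2π]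
    calc 2 * π * |y / (2 * π) - (round (y / (2 * π)) : ℝ)| ≤ 2 * π * (1 / 2) :=
          mul_le_mul_of_nonneg_left h (by linarith)
      _ = π := by ring
  · have hmem : (2 * Real.pi * (round (y / (2 * π)) : ℝ) : ℝ) ∈
        Set.range fun n : ℤ => 2 * Real.pi * n := ⟨round (y / (2 * π)), rfl⟩
    calc Metric.infDist y (Set.range fun n : ℤ => 2 * Real.pi * n)
        ≤ dist y (2 * Real.pi * (round (y / (2 * π)) : ℝ)) :=
          Metric.infDist_le_dist_of_mem hmem
      _ = |y - 2 * π * round (y / (2 * π))| := by rw [Real.dist_eq]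

lemma aux_infDist_le_pi (y : ℝ) :
    Metric.infDist y (Set.range fun n : ℤ => 2 * Real.pi * n) ≤ π := by
  obtain ⟨r, hr, hd, _⟩ := aux_infDist_bounds y
  exact hd.trans hr

/-- Pointwise bound. -/
lemma aux_pointwise (y : ℝ) :
    ‖(1 + Complex.exp (Complex.I * y)) / 2‖ ≤
      1 - (Metric.infDist y (Set.range fun n : ℤ => 2 * Real.pi * n)) ^ 2 / π ^ 2 := by
  have hπ := Real.pi_pos
  -- step 1: the modulus equals |cos (y/2)|
  have habs : ‖(1 + Complex.exp (Complex.I * y)) / 2‖ = |Real.cos (y / 2)| := by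
    have hfac : (1 + Complex.exp (Complex.I * y)) / 2 =
        Complex.exp (((y / 2 : ℝ) : ℂ) * Complex.I) * Complex.cos ((y / 2 : ℝ)) := by
      rw [Complex.cos]
      rw [← mul_div_assoc, mul_add, ← Complex.exp_add, ← Complex.exp_add]
      rw [show ((y / 2 : ℝ) : ℂ) * Complex.I + ((y / 2 : ℝ) : ℂ) * Complex.I
            = Complex.I * y by push_cast; ring,
        show ((y / 2 : ℝ) : ℂ) * Complex.I + -(((y / 2 : ℝ) : ℂ)) * Complex.I = 0 by ring,
        Complex.exp_zero]
      ring
    rw [hfac, norm_mul, Complex.norm_exp_ofReal_mul_I, one_mul, ← Complex.ofReal_cos,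
      Complex.norm_real, Real.norm_eq_abs]
  rw [habs]
  obtain ⟨r, hrle, hd_le, n, hyn⟩ := aux_infDist_bounds y
  have hd0 : 0 ≤ Metric.infDist y (Set.range fun n : ℤ => 2 * Real.pi * n) :=
    Metric.infDist_nonneg
  -- step 2: |cos (y/2)| = cos (|r|/2)
  have hy2 : y / 2 = (n : ℝ) * π + r / 2 := by rw [hyn]; ring
  have hcos_eq : |Real.cos (y / 2)| = Real.cos (|r| / 2) := by
    rw [hy2, Real.cos_add, Real.sin_int_mul_pi, zero_mul, sub_zero, abs_mul,
      Real.abs_cos_int_mul_pi, one_mul]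
    have hev : Real.cos (r / 2) = Real.cos (|r| / 2) := by
      rcases abs_cases r with ⟨h, _⟩ | ⟨h, _⟩
      · rw [h]
      · rw [h, show -r / 2 = -(r / 2) by ring, Real.cos_neg]
    rw [hev]
    exact abs_of_nonneg (Real.cos_nonneg_of_mem_Icc
      ⟨by linarith [abs_nonneg r], by linarith⟩)
  rw [hcos_eq]
  -- step 3: conclude
  have h1 := aux_cos_half_le (abs_nonneg r) hrle
  have h2 : (Metric.infDist y (Set.range fun n : ℤ => 2 * Real.pi * n)) ^ 2 ≤ |r| ^ 2 :=
    pow_le_pow_left₀ hd0 hd_le 2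
  have hπ2 : (0:ℝ) < π ^ 2 := by positivity
  have h3 : (Metric.infDist y (Set.range fun n : ℤ => 2 * Real.pi * n)) ^ 2 / π ^ 2
      ≤ |r| ^ 2 / π ^ 2 := by gcongr
  linarith

/-- For measurable `θ : [0,L] → ℝ`,
`|∫₀ᴸ (1 + e^{iθ(x)})/2 dx/L| ≤ 1 − (1/π²) ∫₀ᴸ d(θ(x))² dx/L`,
where `d(y)` is the distance from `y` to `2πℤ`. -/
theorem stmt_6 (L : ℝ) (hL : 0 < L) (θ : ℝ → ℝ) (hθ : Measurable θ) :
    ‖∫ x in (0:ℝ)..L, (1 + Complex.exp (Complex.I * θ x)) / 2‖ / L ≤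
      1 - (1 / Real.pi ^ 2) *
        ((∫ x in (0:ℝ)..L,
            (Metric.infDist (θ x) (Set.range fun n : ℤ => 2 * Real.pi * n)) ^ 2) / L) := by
  have hπ := Real.pi_pos
  have hπ2 : (0:ℝ) < π ^ 2 := by positivity
  set S := Set.range fun n : ℤ => 2 * Real.pi * n with hS
  -- measurability
  have hfm : Measurable fun x : ℝ => (1 + Complex.exp (Complex.I * θ x)) / 2 := by
    apply Measurable.div_const
    apply Measurable.const_add
    exact Complex.measurable_exp.comp (measurable_const.mul (Complex.measurable_ofReal.comp hθ))
  have hdm : Measurable fun x : ℝ => (Metric.infDist (θ x) S) ^ 2 :=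
    (((Metric.continuous_infDist_pt S).measurable.comp hθ).pow_const 2)
  -- integrability
  have hfi : IntervalIntegrable (fun x : ℝ => (1 + Complex.exp (Complex.I * θ x)) / 2)
      volume 0 L := by
    rw [intervalIntegrable_iff]
    refine Integrable.mono' (g := fun _ => (1:ℝ))
      (integrableOn_const measure_Ioc_lt_top.ne)
      hfm.aestronglyMeasurable.restrict ?_
    filter_upwards with x
    have h := aux_pointwise (θ x)
    have hd0 : 0 ≤ (Metric.infDist (θ x) S) ^ 2 / π ^ 2 := by positivity
    linarith
  have hd2i : IntervalIntegrable (fun x : ℝ => (Metric.infDist (θ x) S) ^ 2) volume 0 L := by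
    rw [intervalIntegrable_iff]
    refine Integrable.mono' (g := fun _ => π ^ 2)
      (integrableOn_const measure_Ioc_lt_top.ne)
      hdm.aestronglyMeasurable.restrict ?_
    filter_upwards with x
    rw [Real.norm_eq_abs, abs_of_nonneg (sq_nonneg _)]
    exact pow_le_pow_left₀ Metric.infDist_nonneg (aux_infDist_le_pi (θ x)) 2
  have hgi : IntervalIntegrable (fun x : ℝ => 1 - (Metric.infDist (θ x) S) ^ 2 / π ^ 2)
      volume 0 L := intervalIntegrable_const.sub (hd2i.div_const _)
  -- the key integral estimate
  have key : ‖∫ x in (0:ℝ)..L, (1 + Complex.exp (Complex.I * θ x)) / 2‖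
      ≤ L - (∫ x in (0:ℝ)..L, (Metric.infDist (θ x) S) ^ 2) / π ^ 2 := by
    have hnorm : ‖∫ x in (0:ℝ)..L, (1 + Complex.exp (Complex.I * θ x)) / 2‖
        ≤ ∫ x in (0:ℝ)..L, ‖(1 + Complex.exp (Complex.I * θ x)) / 2‖ :=
      intervalIntegral.norm_integral_le_integral_norm hL.le
    have hmono : (∫ x in (0:ℝ)..L, ‖(1 + Complex.exp (Complex.I * θ x)) / 2‖)
        ≤ ∫ x in (0:ℝ)..L, (1 - (Metric.infDist (θ x) S) ^ 2 / π ^ 2) := by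
      refine intervalIntegral.integral_mono_on hL.le hfi.norm hgi fun x _ => ?_
      exact aux_pointwise (θ x)
    have heval : (∫ x in (0:ℝ)..L, (1 - (Metric.infDist (θ x) S) ^ 2 / π ^ 2))
        = L - (∫ x in (0:ℝ)..L, (Metric.infDist (θ x) S) ^ 2) / π ^ 2 := by
      rw [intervalIntegral.integral_sub intervalIntegrable_const (hd2i.div_const _),
        intervalIntegral.integral_div, intervalIntegral.integral_const]
      simp
    linarith
  -- final algebra
  rw [div_le_iff₀ hL]
  have hLne : L ≠ 0 := hL.ne'
  have halg : (1 - 1 / π ^ 2 *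
      ((∫ x in (0:ℝ)..L, (Metric.infDist (θ x) S) ^ 2) / L)) * L
      = L - (∫ x in (0:ℝ)..L, (Metric.infDist (θ x) S) ^ 2) / π ^ 2 := by
    field_simp
  rw [halg]
  exact key
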